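/- Let θ̲ = −(γ−1)ℓ/((γ+1)h − (γ−1)ℓ) and A = (−2ℓh/α)/sqrt((γ²−1)(−ℓh)) · (((γ−1)/(γ+1))·(−ℓ/h))^{γ/2}. Then θ̲ ∈ (0,1), and the value-matching and smooth-pasting conditions hold at θ̲: A·φ(θ̲) = −(θ̲h + (1−θ̲)ℓ)/α and A·φ'(θ̲) = −(h−ℓ)/α. -/

import Mathlib

open Real

private lemma pow3 {x : ℝ} (hx : 0 < x) {a b c d : ℝ} (h : a + b + c = d) :
    x ^ a * x ^ b * x ^ c = x ^ d := by
  rw [← Real.rpow_add hx, ← Real.rpow_add hx, h]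

/-- The exit threshold `θ̲ = -(γ-1)ℓ/((γ+1)h - (γ-1)ℓ)` lies in `(0,1)`, and with
`A = (-2ℓh/α)/√((γ²-1)(-ℓh)) · (((γ-1)/(γ+1))·(-ℓ/h))^(γ/2)` the value-matching
and smooth-pasting conditions hold at `θ̲`. -/
theorem stmt_10 (h ℓ σ α γ : ℝ) (hh : 0 < h) (hℓ : ℓ < 0) (hσ : 0 < σ) (hα : 0 < α)
    (hγ : γ = Real.sqrt (1 + 8 * α * σ ^ 2 / (h - ℓ) ^ 2))
    (φ : ℝ → ℝ)
    (hφ : ∀ p : ℝ, φ p = p ^ ((1 - γ) / 2) * (1 - p) ^ ((1 + γ) / 2))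
    (θ A : ℝ)
    (hθ : θ = -(γ - 1) * ℓ / ((γ + 1) * h - (γ - 1) * ℓ))
    (hA : A = (-2 * ℓ * h / α) / Real.sqrt ((γ ^ 2 - 1) * (-ℓ * h)) *
      (((γ - 1) / (γ + 1)) * (-ℓ / h)) ^ (γ / 2)) :
    θ ∈ Set.Ioo (0 : ℝ) 1 ∧
    A * φ θ = -(θ * h + (1 - θ) * ℓ) / α ∧
    A * deriv φ θ = -(h - ℓ) / α := by
  have hhl : 0 < h - ℓ := by linarith
  have hγ1 : 1 < γ := by
    rw [hγ]
    have h1 : (1:ℝ) < 1 + 8 * α * σ ^ 2 / (h - ℓ) ^ 2 := by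
      have : 0 < 8 * α * σ ^ 2 / (h - ℓ) ^ 2 := by positivity
      linarith
    calc (1:ℝ) = Real.sqrt 1 := Real.sqrt_one.symm
      _ < _ := Real.sqrt_lt_sqrt (by norm_num) h1
  set x : ℝ := (γ - 1) * (-ℓ) with hxd
  set y : ℝ := (γ + 1) * h with hyd
  set D : ℝ := x + y with hDd
  have hx : 0 < x := by rw [hxd]; exact mul_pos (by linarith) (by linarith)
  have hy : 0 < y := by rw [hyd]; exact mul_pos (by linarith) hh
  have hD : 0 < D := by positivity
  have hθx : θ = x / D := by
    rw [hθ, hxd, hDd, hyd]; congr 1 <;> ring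
  have h1θ : 1 - θ = y / D := by
    rw [hθx]; field_simp; rw [hDd]; ring
  have hθpos : 0 < θ := by rw [hθx]; exact div_pos hx hD
  have hθlt : θ < 1 := by
    rw [hθx, div_lt_one hD]; linarith
  -- rewrite A
  have hsq : Real.sqrt ((γ ^ 2 - 1) * (-ℓ * h)) = x ^ (1/2 : ℝ) * y ^ (1/2 : ℝ) := by
    have hxy : (γ ^ 2 - 1) * (-ℓ * h) = x * y := by rw [hxd, hyd]; ring
    rw [hxy, Real.sqrt_eq_rpow (x * y), Real.mul_rpow hx.le hy.le]
  have hratio : ((γ - 1) / (γ + 1)) * (-ℓ / h) = x / y := by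
    rw [hxd, hyd]; field_simp
  have hA' : A = (-2 * ℓ * h / α) * (x ^ (-(1/2) : ℝ) * y ^ (-(1/2) : ℝ)) *
      (x ^ (γ/2) * y ^ (-(γ/2) : ℝ)) := by
    rw [hA, hsq, hratio, Real.div_rpow hx.le hy.le, Real.rpow_neg hx.le,
      Real.rpow_neg hy.le, Real.rpow_neg hy.le]
    field_simp
  have hφθ : φ θ = x ^ ((1 - γ)/2) * y ^ ((1 + γ)/2) / D := by
    rw [hφ θ, h1θ, hθx, Real.div_rpow hx.le hD.le, Real.div_rpow hy.le hD.le,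
      div_mul_div_comm, ← Real.rpow_add hD]
    have : (1 - γ)/2 + (1 + γ)/2 = (1:ℝ) := by ring
    rw [this, Real.rpow_one]
  -- value matching
  have ex : x ^ (-(1/2) : ℝ) * x ^ (γ/2) * x ^ ((1 - γ)/2) = 1 := by
    rw [pow3 hx (show -(1/2) + γ/2 + (1-γ)/2 = (0:ℝ) by ring), Real.rpow_zero]
  have ey : y ^ (-(1/2) : ℝ) * y ^ (-(γ/2) : ℝ) * y ^ ((1 + γ)/2) = 1 := by
    rw [pow3 hy (show -(1/2) + -(γ/2) + (1+γ)/2 = (0:ℝ) by ring), Real.rpow_zero]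
  have hVM : A * φ θ = -(θ * h + (1 - θ) * ℓ) / α := by
    have step : A * φ θ = (-2 * ℓ * h / α) / D *
        ((x ^ (-(1/2) : ℝ) * x ^ (γ/2) * x ^ ((1 - γ)/2)) *
         (y ^ (-(1/2) : ℝ) * y ^ (-(γ/2) : ℝ) * y ^ ((1 + γ)/2))) := by
      rw [hA', hφθ]; ring
    have hnum : θ * h + (1 - θ) * ℓ = 2 * ℓ * h / D := by
      rw [h1θ, hθx]
      field_simp
      rw [hxd, hyd]
      ring
    rw [step, ex, ey, hnum]
    ring
  refine ⟨⟨hθpos, hθlt⟩, hVM, ?_⟩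
  -- derivative
  have hφfun : φ = fun p : ℝ => p ^ ((1 - γ)/2) * (1 - p) ^ ((1 + γ)/2) := funext hφ
  have d1 : HasDerivAt (fun p : ℝ => p ^ ((1 - γ)/2)) ((1 - γ)/2 * θ ^ ((1 - γ)/2 - 1)) θ :=
    Real.hasDerivAt_rpow_const (Or.inl hθpos.ne')
  have dinner : HasDerivAt (fun p : ℝ => 1 - p) (-1) θ := by
    simpa [Pi.sub_def] using (hasDerivAt_const θ (1:ℝ)).sub (hasDerivAt_id θ)
  have d2 : HasDerivAt (fun p : ℝ => (1 - p) ^ ((1 + γ)/2))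
      ((1 + γ)/2 * (1 - θ) ^ ((1 + γ)/2 - 1) * (-1)) θ :=
    (Real.hasDerivAt_rpow_const (Or.inl (by linarith : (1:ℝ) - θ ≠ 0))).comp θ dinner
  have hd : deriv φ θ = (1 - γ)/2 * θ ^ ((1 - γ)/2 - 1) * (1 - θ) ^ ((1 + γ)/2)
      + θ ^ ((1 - γ)/2) * ((1 + γ)/2 * (1 - θ) ^ ((1 + γ)/2 - 1) * (-1)) := by
    rw [hφfun]
    exact (d1.mul d2).deriv
  have t1 : θ ^ ((1 - γ)/2 - 1) * (1 - θ) ^ ((1 + γ)/2)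
      = x ^ ((1 - γ)/2 - 1) * y ^ ((1 + γ)/2) := by
    rw [h1θ, hθx, Real.div_rpow hx.le hD.le, Real.div_rpow hy.le hD.le,
      div_mul_div_comm, ← Real.rpow_add hD,
      show (1 - γ)/2 - 1 + (1 + γ)/2 = (0:ℝ) by ring, Real.rpow_zero, div_one]
  have t2 : θ ^ ((1 - γ)/2) * (1 - θ) ^ ((1 + γ)/2 - 1)
      = x ^ ((1 - γ)/2) * y ^ ((1 + γ)/2 - 1) := by
    rw [h1θ, hθx, Real.div_rpow hx.le hD.le, Real.div_rpow hy.le hD.le,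
      div_mul_div_comm, ← Real.rpow_add hD,
      show (1 - γ)/2 + ((1 + γ)/2 - 1) = (0:ℝ) by ring, Real.rpow_zero, div_one]
  have ex1 : x ^ (-(1/2) : ℝ) * x ^ (γ/2) * x ^ ((1 - γ)/2 - 1) = x⁻¹ := by
    rw [pow3 hx (show -(1/2) + γ/2 + ((1-γ)/2 - 1) = (-1:ℝ) by ring), Real.rpow_neg_one]
  have ey2 : y ^ (-(1/2) : ℝ) * y ^ (-(γ/2) : ℝ) * y ^ ((1 + γ)/2 - 1) = y⁻¹ := by
    rw [pow3 hy (show -(1/2) + -(γ/2) + ((1+γ)/2 - 1) = (-1:ℝ) by ring), Real.rpow_neg_one]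
  have step : A * deriv φ θ = (-2 * ℓ * h / α) * ((1 - γ)/2) *
        ((x ^ (-(1/2) : ℝ) * x ^ (γ/2) * x ^ ((1 - γ)/2 - 1)) *
         (y ^ (-(1/2) : ℝ) * y ^ (-(γ/2) : ℝ) * y ^ ((1 + γ)/2))) -
      (-2 * ℓ * h / α) * ((1 + γ)/2) *
        ((x ^ (-(1/2) : ℝ) * x ^ (γ/2) * x ^ ((1 - γ)/2)) *
         (y ^ (-(1/2) : ℝ) * y ^ (-(γ/2) : ℝ) * y ^ ((1 + γ)/2 - 1))) := by
    rw [hd]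
    rw [show ((1 - γ)/2 * θ ^ ((1 - γ)/2 - 1) * (1 - θ) ^ ((1 + γ)/2)
      + θ ^ ((1 - γ)/2) * ((1 + γ)/2 * (1 - θ) ^ ((1 + γ)/2 - 1) * (-1)))
      = (1 - γ)/2 * (θ ^ ((1 - γ)/2 - 1) * (1 - θ) ^ ((1 + γ)/2))
        - (1 + γ)/2 * (θ ^ ((1 - γ)/2) * (1 - θ) ^ ((1 + γ)/2 - 1)) by ring,
      t1, t2, hA']
    ring
  rw [step, ex1, ey, ex, ey2]
  field_simp [hx.ne', hy.ne', hα.ne']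
  rw [hxd, hyd]
  ring
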